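/- Let Y be a topological space equipped with a family of pairwise disjoint subsets Y_i (i ∈ I) such that Y = ⊔_{i∈I} Y_i, and such that whenever a sequence {y_n} in Y converges to a point y ∈ Y_i, then y_n ∈ Y_i for all sufficiently large n. Let Z be a topological space of class 𝒞 and let F : Z → Y be a continuous mapping. If z ∈ Z and F(z) ∈ Y_i, then F(Z) ⊆ Y_i. -/
import Mathlib


set_option synthInstance.maxHeartbeats 1000000
set_option maxHeartbeats 2000000

noncomputable section

open scoped Classical

/-- A topological space `Z` is of class `𝒞` if each pair of points of `Z` belongs to the image
of a continuous mapping from a nonempty connected first-countable `T1` space to `Z`. -/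
def IsClassC (Z : Type*) [TopologicalSpace Z] : Prop :=
  ∀ z₁ z₂ : Z, ∃ (W : Type) (_ : TopologicalSpace W), Nonempty W ∧ ConnectedSpace W ∧
    FirstCountableTopology W ∧ T1Space W ∧
      ∃ g : W → Z, Continuous g ∧ z₁ ∈ Set.range g ∧ z₂ ∈ Set.range g

/-- Proposition 2.1: if `Y` is the disjoint union of subsets `Y i` such that any convergent
sequence with limit in `Y i` eventually lies in `Y i`, `Z` is of class `𝒞`, and `F : Z → Y`
is continuous with `F z ∈ Y i`, then `F(Z) ⊆ Y i`. -/
theorem statement0 {Y : Type*} [TopologicalSpace Y] {I : Type*} (Yi : I → Set Y)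
    (hdisj : ∀ i j : I, i ≠ j → Disjoint (Yi i) (Yi j))
    (hcover : (⋃ i, Yi i) = Set.univ)
    (hconv : ∀ (u : ℕ → Y) (y : Y) (i : I), Filter.Tendsto u Filter.atTop (nhds y) →
      y ∈ Yi i → ∀ᶠ n in Filter.atTop, u n ∈ Yi i)
    {Z : Type*} [TopologicalSpace Z] (hZ : IsClassC Z)
    (F : Z → Y) (hF : Continuous F) (z : Z) (i : I) (hz : F z ∈ Yi i) :
    Set.range F ⊆ Yi i := by
  rintro _ ⟨z', rfl⟩
  obtain ⟨W, _tW, hne, hconn, hfc, ht1, g, hg, ⟨w, hw⟩, ⟨w', hw'⟩⟩ := hZ z z'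
  set h : W → Y := F ∘ g with hh
  have hhc : Continuous h := hF.comp hg
  set S : Set W := h ⁻¹' (Yi i) with hS
  -- S is closed
  have hclosed : IsClosed S := by
    rw [← closure_subset_iff_isClosed]
    intro x hx
    obtain ⟨u, hu, hulim⟩ := mem_closure_iff_seq_limit.1 hx
    have hlim : Filter.Tendsto (h ∘ u) Filter.atTop (nhds (h x)) :=
      (hhc.continuousAt.tendsto).comp hulim
    obtain ⟨j, hj⟩ : ∃ j, h x ∈ Yi j := by
      have := hcover ▸ Set.mem_univ (h x)
      simpa using (hcover.symm ▸ Set.mem_univ (h x) : h x ∈ ⋃ k, Yi k)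
    have hev := hconv (h ∘ u) (h x) j hlim hj
    obtain ⟨n, hn⟩ := hev.exists
    have : j = i := by
      by_contra hji
      exact (hdisj j i hji).le_bot ⟨hn, hu n⟩
    rwa [this] at hj
  -- S is open
  have hopen : IsOpen S := by
    rw [← isClosed_compl_iff, ← closure_subset_iff_isClosed]
    intro x hx
    obtain ⟨u, hu, hulim⟩ := mem_closure_iff_seq_limit.1 hx
    intro hxS
    have hlim : Filter.Tendsto (h ∘ u) Filter.atTop (nhds (h x)) :=
      (hhc.continuousAt.tendsto).comp hulim
    have hev := hconv (h ∘ u) (h x) i hlim hxS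
    obtain ⟨n, hn⟩ := hev.exists
    exact hu n hn
  have hSne : S.Nonempty := ⟨w, by simp [hS, hh, hw, hz]⟩
  have : S = Set.univ := IsClopen.eq_univ ⟨hclosed, hopen⟩ hSne
  have : w' ∈ S := this ▸ Set.mem_univ w'
  simpa [hS, hh, hw'] using this
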